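/- Let G = (V,E) be a graph on n vertices with maximum degree Δ ≥ 1, and let ENV : V × {1,2} → {0,1} be an environment. Define a pair (v,2) to be violating if either ENV(v,2)=0 and some neighbor u of v has ENV(u,1)=1, or ENV(v,2)=1 and all neighbors u of v have ENV(u,1)=0. Let viol(ENV) be the number of violating pairs and dist(ENV, 1-BP) the minimum, over all environments ENV' with no violating pairs, of (1/(2n))·|{(v,t) : ENV(v,t) ≠ ENV'(v,t)}|. Then viol(ENV)/(2Δn) ≤ dist(ENV, 1-BP) ≤ viol(ENV)/(2n). -/

import Mathlib

open Finset

variable {V : Type*} [Fintype V] [DecidableEq V]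

/-- Hamming distance between two environments on two time steps
(time step 1 is index `0`, time step 2 is index `1`). -/
def ham2 (ENV ENV' : V → Fin 2 → Bool) : ℕ :=
  ((Finset.univ : Finset (V × Fin 2)).filter fun p => ENV p.1 p.2 ≠ ENV' p.1 p.2).card

/-- Number of violating pairs `(v,2)` of an environment for the 1-BP rule. -/
def viol2 (G : SimpleGraph V) [DecidableRel G.Adj] (ENV : V → Fin 2 → Bool) : ℕ :=
  (Finset.univ.filter fun v =>
    (ENV v 1 = false ∧ ∃ u ∈ G.neighborFinset v, ENV u 0 = true) ∨
    (ENV v 1 = true ∧ ∀ u ∈ G.neighborFinset v, ENV u 0 = false)).card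

/-- An environment on two steps follows the 1-BP rule (has no violating pairs). -/
def follows2 (G : SimpleGraph V) [DecidableRel G.Adj] (ENV : V → Fin 2 → Bool) : Prop :=
  ∀ v, ENV v 1 = true ↔ ∃ u ∈ G.neighborFinset v, ENV u 0 = true

/-- For `T = 2`, `viol(ENV)/(2Δn) ≤ dist(ENV,1-BP) ≤ viol(ENV)/(2n)`,
where `dist(ENV,1-BP)` is the minimum of `ham(ENV,ENV')/(2n)` over environments `ENV'`
with no violating pairs. -/
theorem stmt4 (G : SimpleGraph V) [DecidableRel G.Adj] (n Δ : ℕ)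
    (hn : n = Fintype.card V) (hΔ1 : 1 ≤ Δ) (hΔ : ∀ v, G.degree v ≤ Δ)
    (hiso : ∀ v, 0 < G.degree v) (ENV : V → Fin 2 → Bool) :
    (∀ ENV' : V → Fin 2 → Bool, follows2 G ENV' →
      (viol2 G ENV : ℝ) / (2 * Δ * n) ≤ (ham2 ENV ENV' : ℝ) / (2 * n)) ∧
    (∃ ENV' : V → Fin 2 → Bool, follows2 G ENV' ∧
      (ham2 ENV ENV' : ℝ) / (2 * n) ≤ (viol2 G ENV : ℝ) / (2 * n)) := by
  classical
  constructor
  · intro ENV' hE'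
    have key : viol2 G ENV ≤ Δ * ham2 ENV ENV' := by
      set S := (Finset.univ.filter fun v =>
        (ENV v 1 = false ∧ ∃ u ∈ G.neighborFinset v, ENV u 0 = true) ∨
        (ENV v 1 = true ∧ ∀ u ∈ G.neighborFinset v, ENV u 0 = false)) with hSdef
      set T := ((Finset.univ : Finset (V × Fin 2)).filter fun p =>
        ENV p.1 p.2 ≠ ENV' p.1 p.2) with hTdef
      let f : V → V × Fin 2 := fun v =>
        if h : ∃ u ∈ G.neighborFinset v, ENV u 0 ≠ ENV' u 0 then (h.choose, 0) else (v, 1)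
      have hmaps : ∀ v ∈ S, f v ∈ T := by
        intro v hv
        rw [hSdef, mem_filter] at hv
        by_cases h : ∃ u ∈ G.neighborFinset v, ENV u 0 ≠ ENV' u 0
        · have hc := h.choose_spec
          simp only [f, dif_pos h, hTdef, mem_filter, mem_univ, true_and]
          exact hc.2
        · simp only [f, dif_neg h, hTdef, mem_filter, mem_univ, true_and]
          push_neg at h
          -- all neighbors agree at time 0
          rcases hv.2 with ⟨h1, u, hu, hu0⟩ | ⟨h1, hall⟩
          · have : ENV' u 0 = true := (h u hu) ▸ hu0
            have : ENV' v 1 = true := (hE' v).2 ⟨u, hu, this⟩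
            simp [h1, this]
          · have : ENV' v 1 = false := by
              by_contra hc
              have : ENV' v 1 = true := by
                cases hb : ENV' v 1 <;> simp_all
              obtain ⟨u, hu, hu0⟩ := (hE' v).1 this
              have := h u hu
              have := hall u hu
              simp_all
            simp [h1, this]
      have hfib : ∀ b ∈ T, (S.filter fun v => f v = b).card ≤ Δ := by
        rintro ⟨u, t⟩ _
        fin_cases t
        · -- fiber over (u, 0): contained in neighbors of u
          have hsub : (S.filter fun v => f v = (u, (0 : Fin 2))) ⊆ G.neighborFinset u := by
            intro v hv
            rw [mem_filter] at hv
            have hfv := hv.2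
            by_cases h : ∃ w ∈ G.neighborFinset v, ENV w 0 ≠ ENV' w 0
            · have hc := h.choose_spec
              simp only [f, dif_pos h] at hfv
              have : h.choose = u := by
                have := congrArg Prod.fst hfv; simpa using this
              rw [this] at hc
              rw [SimpleGraph.mem_neighborFinset] at hc ⊢
              exact hc.1.symm
            · simp only [f, dif_neg h, Prod.mk.injEq] at hfv
              exact absurd hfv.2 (by decide)
          calc (S.filter fun v => f v = (u, (0:Fin 2))).card
              ≤ (G.neighborFinset u).card := card_le_card hsub
            _ = G.degree u := by rw [SimpleGraph.card_neighborFinset_eq_degree]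
            _ ≤ Δ := hΔ u
        · -- fiber over (u, 1): at most the singleton {u}
          have hsub : (S.filter fun v => f v = (u, (1 : Fin 2))) ⊆ {u} := by
            intro v hv
            rw [mem_filter] at hv
            have hfv := hv.2
            by_cases h : ∃ w ∈ G.neighborFinset v, ENV w 0 ≠ ENV' w 0
            · simp only [f, dif_pos h, Prod.mk.injEq] at hfv
              exact absurd hfv.2 (by decide)
            · simp only [f, dif_neg h, Prod.mk.injEq] at hfv
              simp [hfv.1]
          calc (S.filter fun v => f v = (u, (1:Fin 2))).card
              ≤ ({u} : Finset V).card := card_le_card hsub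
            _ = 1 := card_singleton u
            _ ≤ Δ := hΔ1
      exact card_le_mul_card_image_of_maps_to hmaps Δ hfib
    rcases Nat.eq_zero_or_pos n with h0 | hpos
    · simp [h0]
    · have hn' : (0:ℝ) < n := by exact_mod_cast hpos
      have hΔ' : (1:ℝ) ≤ Δ := by exact_mod_cast hΔ1
      rw [div_le_div_iff₀ (by positivity) (by positivity)]
      have key' : (viol2 G ENV : ℝ) ≤ Δ * ham2 ENV ENV' := by exact_mod_cast key
      have hham : (0:ℝ) ≤ (ham2 ENV ENV' : ℝ) := Nat.cast_nonneg _
      nlinarith [key', hn'.le, hham]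
  · refine ⟨fun v t => if t = 0 then ENV v 0 else
      decide (∃ u ∈ G.neighborFinset v, ENV u 0 = true), ?_, ?_⟩
    · intro v
      simp
    · have hle : ham2 ENV (fun v t => if t = 0 then ENV v 0 else
          decide (∃ u ∈ G.neighborFinset v, ENV u 0 = true)) ≤ viol2 G ENV := by
        have h01 : ∀ t : Fin 2, t = 0 ∨ t = 1 := by decide
        apply Finset.card_le_card_of_injOn Prod.fst
        · rintro ⟨v, t⟩ hp
          rw [mem_coe, mem_filter] at hp
          have hd := hp.2
          simp only at hd
          rcases h01 t with ht | ht
          · rw [ht] at hd; simp at hd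
          · rw [ht] at hd
            simp only [if_neg (by decide : ¬((1:Fin 2) = 0))] at hd
            simp only [mem_coe, mem_filter, mem_univ, true_and]
            cases h1 : ENV v 1
            · left
              refine ⟨rfl, ?_⟩
              rw [h1] at hd
              by_contra hc
              have : decide (∃ u ∈ G.neighborFinset v, ENV u 0 = true) = false := by
                simpa using hc
              simp_all
            · right
              refine ⟨rfl, ?_⟩
              rw [h1] at hd
              intro u hu
              by_contra hc
              have hu0 : ENV u 0 = true := by cases hb : ENV u 0 <;> simp_all
              have : decide (∃ u ∈ G.neighborFinset v, ENV u 0 = true) = true := by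
                simp only [decide_eq_true_iff]; exact ⟨u, hu, hu0⟩
              simp_all
        · rintro ⟨v, t⟩ hp ⟨v', t'⟩ hp' hvv
          rw [mem_coe, mem_filter] at hp hp'
          have hd := hp.2; have hd' := hp'.2
          simp only at hd hd' hvv
          have ht : t = 1 := by
            rcases h01 t with h | h
            · rw [h] at hd; simp at hd
            · exact h
          have ht' : t' = 1 := by
            rcases h01 t' with h | h
            · rw [h] at hd'; simp at hd'
            · exact h
          rw [ht, ht', hvv]
      rcases Nat.eq_zero_or_pos n with h0 | hpos
      · simp [h0]
      · have hn' : (0:ℝ) < n := by exact_mod_cast hpos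
        have hle' : (ham2 ENV (fun v t => if t = 0 then ENV v 0 else
            decide (∃ u ∈ G.neighborFinset v, ENV u 0 = true)) : ℝ) ≤ viol2 G ENV := by
          exact_mod_cast hle
        gcongr
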